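/- The lexicographic orders ℤ × ℤ and ℚ × ℤ are isotypic but not order-isomorphic. -/

import Mathlib

open FirstOrder Language

attribute [local instance] FirstOrder.Language.orderStructure

/-- Two structures are isotypic if every finite tuple in one of them has a
counterpart in the other realizing exactly the same first-order formulas,
and vice versa. -/
def Isotypic (L : FirstOrder.Language) (M N : Type*) [L.Structure M] [L.Structure N] : Prop :=
  (∀ (n : ℕ) (a : Fin n → M), ∃ b : Fin n → N,
      ∀ φ : L.Formula (Fin n), φ.Realize a ↔ φ.Realize b) ∧
  (∀ (n : ℕ) (b : Fin n → N), ∃ a : Fin n → M,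
      ∀ φ : L.Formula (Fin n), φ.Realize a ↔ φ.Realize b)

namespace LexEF

open Set

variable {α : Type*} [LinearOrder α]

/-- Distance-like invariant: size of the interval `[x, y)`. -/
noncomputable def δ (x y : α) : ℕ∞ := (Set.Ico x y).encard

lemma δ_self (x : α) : δ x x = 0 := by simp [δ]

lemma δ_eq_zero {x y : α} (h : ¬ x < y) : δ x y = 0 := by
  simp [δ, Set.Ico_eq_empty h]

lemma δ_pos_iff {x y : α} : 0 < δ x y ↔ x < y := by
  rw [pos_iff_ne_zero]
  constructor
  · intro h
    by_contra hlt
    exact h (δ_eq_zero hlt)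
  · intro h h0
    have hx : x ∈ Set.Ico x y := ⟨le_rfl, h⟩
    rw [δ, Set.encard_eq_zero] at h0
    rw [h0] at hx
    exact hx

lemma δ_add {x y z : α} (h1 : x ≤ y) (h2 : y ≤ z) : δ x z = δ x y + δ y z := by
  rw [δ, δ, δ, ← Set.encard_union_eq, Set.Ico_union_Ico_eq_Ico h1 h2]
  exact Set.Ico_disjoint_Ico_same

lemma δ_mono_right {x y z : α} (h : y ≤ z) : δ x y ≤ δ x z :=
  Set.encard_mono (Set.Ico_subset_Ico_right h)

lemma δ_anti_left {x x' z : α} (h : x ≤ x') : δ x' z ≤ δ x z :=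
  Set.encard_mono (Set.Ico_subset_Ico_left h)

lemma lt_of_δ_lt_right {x y z : α} (h : δ x y < δ x z) : y < z := by
  by_contra hc
  exact absurd (δ_mono_right (not_lt.mp hc)) (not_le.mpr h)

lemma lt_of_δ_lt_left {x y z : α} (h : δ y z < δ x z) : x < y := by
  by_contra hc
  exact absurd (δ_anti_left (not_lt.mp hc)) (not_le.mpr h)

section Succ

variable {S : α → α} (hS : ∀ z : α, z ⋖ S z)

include hS

lemma δ_succ (z : α) : δ z (S z) = 1 := by
  have : Set.Ico z (S z) = {z} := by
    ext w
    simp only [Set.mem_Ico, Set.mem_singleton_iff]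
    constructor
    · rintro ⟨h1, h2⟩
      rcases h1.lt_or_eq with h | h
      · exact absurd ((hS z).2 h h2) (by simp)
      · exact h.symm
    · rintro rfl
      exact ⟨le_rfl, (hS _).1⟩
  rw [δ, this, Set.encard_singleton]

lemma le_succ_iterate (z : α) (t : ℕ) : z ≤ S^[t] z := by
  induction t with
  | zero => simp
  | succ t ih => rw [Function.iterate_succ_apply']; exact ih.trans (hS _).1.le

lemma δ_succ_iterate (z : α) (t : ℕ) : δ z (S^[t] z) = t := by
  induction t with
  | zero => simp [δ_self]
  | succ t ih =>
    rw [Function.iterate_succ_apply', δ_add (le_succ_iterate hS z t) (hS _).1.le, ih,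
      δ_succ hS]
    rfl

end Succ

section Pred

variable {P : α → α} (hP : ∀ z : α, P z ⋖ z)

include hP

lemma δ_pred (z : α) : δ (P z) z = 1 := by
  have : Set.Ico (P z) z = {P z} := by
    ext w
    simp only [Set.mem_Ico, Set.mem_singleton_iff]
    constructor
    · rintro ⟨h1, h2⟩
      rcases h1.lt_or_eq with h | h
      · exact absurd ((hP z).2 h h2) (by simp)
      · exact h.symm
    · rintro rfl
      exact ⟨le_rfl, (hP _).1⟩
  rw [δ, this, Set.encard_singleton]

lemma pred_iterate_le (z : α) (t : ℕ) : P^[t] z ≤ z := by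
  induction t with
  | zero => simp
  | succ t ih => rw [Function.iterate_succ_apply']; exact ((hP _).1.le).trans ih

lemma δ_pred_iterate (z : α) (t : ℕ) : δ (P^[t] z) z = t := by
  induction t with
  | zero => simp [δ_self]
  | succ t ih =>
    rw [Function.iterate_succ_apply', δ_add ((hP _).1.le) (pred_iterate_le hP z t), ih,
      δ_pred hP]
    rw [add_comm]
    rfl

end Pred

/-- `D k m n`: `m` and `n` are equal or both at least `2^k`. -/
def D (k : ℕ) (m n : ℕ∞) : Prop := m = n ∨ (2 ^ k ≤ m ∧ 2 ^ k ≤ n)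

lemma D.symm {k m n} (h : D k m n) : D k n m := by
  rcases h with h | h
  · exact Or.inl h.symm
  · exact Or.inr ⟨h.2, h.1⟩

lemma D.mono {k k' m n} (hk : k' ≤ k) (h : D k m n) : D k' m n := by
  rcases h with h | h
  · exact Or.inl h
  · exact Or.inr ⟨le_trans (by exact_mod_cast pow_le_pow_right₀ one_le_two hk) h.1,
      le_trans (by exact_mod_cast pow_le_pow_right₀ one_le_two hk) h.2⟩

lemma D.add {k m n m' n'} (h : D k m n) (h' : D k m' n') : D k (m + m') (n + n') := by
  rcases h with h | h
  · rcases h' with h' | h'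
    · exact Or.inl (by rw [h, h'])
    · exact Or.inr ⟨le_trans h'.1 (le_add_self), le_trans h'.2 (le_add_self)⟩
  · exact Or.inr ⟨le_trans h.1 le_self_add, le_trans h.2 le_self_add⟩

lemma D.zero_iff {k m n} (h : D k m n) : m = 0 ↔ n = 0 := by
  rcases h with h | h
  · rw [h]
  · have h2 : (2:ℕ∞) ^ k ≠ 0 := pow_ne_zero _ (by simp)
    constructor <;> intro h0 <;> rw [h0] at h
    · exact (h2 (nonpos_iff_eq_zero.mp h.1)).elim
    · exact (h2 (nonpos_iff_eq_zero.mp h.2)).elim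

lemma pow_ne_top (k : ℕ) : ((2:ℕ∞))^k ≠ ⊤ := by
  rw [show ((2:ℕ∞))^k = ((2^k : ℕ) : ℕ∞) by push_cast; rfl]
  exact WithTop.coe_ne_top
lemma lt_add_of_ne_zero {u v : ℕ∞} (hu : u ≠ ⊤) (hv : v ≠ 0) : u < u + v := by
  conv_lhs => rw [← add_zero u]
  exact WithTop.add_lt_add_of_le_of_lt hu le_rfl (show (0:ℕ∞) < v from pos_iff_ne_zero.mpr hv)
lemma pow_lt_succ (k : ℕ) : ((2:ℕ∞))^k < 2^(k+1) := by
  rw [show ((2:ℕ∞))^k = ((2^k : ℕ) : ℕ∞) by push_cast; rfl,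
    show ((2:ℕ∞))^(k+1) = ((2^(k+1) : ℕ) : ℕ∞) by push_cast; rfl]
  exact_mod_cast Nat.pow_lt_pow_right one_lt_two (Nat.lt_succ_self k)
lemma pow_succ' (k : ℕ) : ((2:ℕ∞))^(k+1) = 2^k + 2^k := by
  rw [pow_succ, mul_two]
lemma trick {m w : ℕ∞} {k : ℕ} (h : 2^(k+1) ≤ m + w) (hw : w ≤ 2^k) : 2^k ≤ m := by
  by_contra hc
  push_neg at hc
  have h2 : m + w < 2^k + 2^k :=
    WithTop.add_lt_add_of_lt_of_le (ne_top_of_le_ne_top (pow_ne_top k) hw) hc hw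
  rw [← pow_succ' k] at h2
  exact absurd h (not_le.mpr h2)
section TwoOrders

variable {M N : Type*} [LinearOrder M] [LinearOrder N]

/-- Ehrenfeucht–Fraïssé style equivalence of tuples with `2^k` distance resolution. -/
def E (k : ℕ) {ι : Type*} (a : ι → M) (b : ι → N) : Prop :=
  ∀ i j, D k (δ (a i) (a j)) (δ (b i) (b j))

lemma E.symm {k : ℕ} {ι : Type*} {a : ι → M} {b : ι → N} (h : E k a b) : E k b a :=
  fun i j => (h i j).symm

lemma E.mono {k k' : ℕ} (hk : k' ≤ k) {ι : Type*} {a : ι → M} {b : ι → N} (h : E k a b) :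
    E k' a b := fun i j => (h i j).mono hk

lemma E.comp {k : ℕ} {ι κ : Type*} {a : ι → M} {b : ι → N} (h : E k a b) (f : κ → ι) :
    E k (a ∘ f) (b ∘ f) := fun i j => h (f i) (f j)

lemma E.lt_iff {k : ℕ} {ι : Type*} {a : ι → M} {b : ι → N} (h : E k a b) (i j : ι) :
    a i < a j ↔ b i < b j := by
  have h1 := (h i j).zero_iff
  constructor <;> intro hlt
  · exact δ_pos_iff.mp (pos_iff_ne_zero.mpr
      (fun hz => pos_iff_ne_zero.mp (δ_pos_iff.mpr hlt) (h1.mpr hz)))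
  · exact δ_pos_iff.mp (pos_iff_ne_zero.mpr
      (fun hz => pos_iff_ne_zero.mp (δ_pos_iff.mpr hlt) (h1.mp hz)))

lemma E.le_iff {k : ℕ} {ι : Type*} {a : ι → M} {b : ι → N} (h : E k a b) (i j : ι) :
    a i ≤ a j ↔ b i ≤ b j := by
  rw [← not_lt, ← not_lt]
  exact not_congr (h.lt_iff j i)

lemma E.eq_iff {k : ℕ} {ι : Type*} {a : ι → M} {b : ι → N} (h : E k a b) (i j : ι) :
    a i = a j ↔ b i = b j := by
  rw [le_antisymm_iff, le_antisymm_iff, h.le_iff i j, h.le_iff j i]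

lemma exists_above {S : N → N} (hS : ∀ z : N, z ⋖ S z) (k : ℕ) (z : N) (u : ℕ∞) :
    ∃ y : N, δ z y = min u (2 ^ k) := by
  refine ⟨S^[(min u (2 ^ k)).toNat] z, ?_⟩
  rw [δ_succ_iterate hS]
  exact ENat.coe_toNat (ne_top_of_le_ne_top (pow_ne_top k) (min_le_right _ _))

lemma exists_below {P : N → N} (hP : ∀ z : N, P z ⋖ z) (k : ℕ) (z : N) (v : ℕ∞) :
    ∃ y : N, δ y z = min v (2 ^ k) := by
  refine ⟨P^[(min v (2 ^ k)).toNat] z, ?_⟩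
  rw [δ_pred_iterate hP]
  exact ENat.coe_toNat (ne_top_of_le_ne_top (pow_ne_top k) (min_le_right _ _))

lemma D_min (k : ℕ) (u : ℕ∞) : D k u (min u (2 ^ k)) := by
  rcases le_total u (2 ^ k) with h | h
  · exact Or.inl (min_eq_left h).symm
  · exact Or.inr ⟨h, le_of_eq (min_eq_right h).symm⟩

section Forth

variable {k : ℕ} {ι : Type*} {a : ι → M} {b : ι → N} {x : M}

lemma lower_side (hE : E (k + 1) a b) {i₀ : ι} (hmax : ∀ j, a j < x → a j ≤ a i₀)
    (hi₀x : a i₀ ≤ x) {y : N} (hby : b i₀ < y) (hDu : D k (δ (a i₀) x) (δ (b i₀) y)) :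
    ∀ j, a j < x → D k (δ (a j) x) (δ (b j) y) ∧ b j < y := by
  intro j hj
  have h1 : a j ≤ a i₀ := hmax j hj
  have h2 : b j ≤ b i₀ := (hE.le_iff j i₀).mp h1
  refine ⟨?_, lt_of_le_of_lt h2 hby⟩
  rw [δ_add h1 hi₀x, δ_add h2 hby.le]
  exact ((hE j i₀).mono (Nat.le_succ k)).add hDu

lemma upper_side (hE : E (k + 1) a b) {j₀ : ι} (hmin : ∀ j, x < a j → a j₀ ≤ a j)
    (hxj₀ : x ≤ a j₀) {y : N} (hyb : y < b j₀) (hDv : D k (δ x (a j₀)) (δ y (b j₀))) :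
    ∀ j, x < a j → D k (δ x (a j)) (δ y (b j)) ∧ y < b j := by
  intro j hj
  have h1 : a j₀ ≤ a j := hmin j hj
  have h2 : b j₀ ≤ b j := (hE.le_iff j₀ j).mp h1
  refine ⟨?_, lt_of_lt_of_le hyb h2⟩
  rw [δ_add hxj₀ h1, δ_add hyb.le h2]
  exact hDv.add ((hE j₀ j).mono (Nat.le_succ k))

theorem forth [Fintype ι] [Nonempty N] {S P : N → N} (hS : ∀ z : N, z ⋖ S z)
    (hP : ∀ z : N, P z ⋖ z) (hE : E (k + 1) a b) (x : M) :
    ∃ y : N, E k (fun o => Option.elim o x a) (fun o => Option.elim o y b) := by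
  classical
  -- it suffices to establish the conditions relating the new elements to the old ones
  have key : ∀ y : N,
      (∀ j, (a j < x → D k (δ (a j) x) (δ (b j) y) ∧ b j < y) ∧
        (x < a j → D k (δ x (a j)) (δ y (b j)) ∧ y < b j) ∧ (a j = x → b j = y)) →
      E k (fun o => Option.elim o x a) (fun o => Option.elim o y b) := by
    intro y hy i j
    match i, j with
    | none, none => exact Or.inl (by simp only [Option.elim]; rw [δ_self, δ_self])
    | some i, some j => exact (hE i j).mono (Nat.le_succ k)
    | some i, none =>
      simp only [Option.elim]
      rcases lt_trichotomy (a i) x with h | h | h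
      · exact ((hy i).1 h).1
      · rw [show y = b i from ((hy i).2.2 h).symm, h]
        exact Or.inl (by rw [δ_self, δ_self])
      · rw [δ_eq_zero (asymm h), δ_eq_zero (asymm ((hy i).2.1 h).2)]
        exact Or.inl rfl
    | none, some j =>
      simp only [Option.elim]
      rcases lt_trichotomy (a j) x with h | h | h
      · rw [δ_eq_zero (asymm h), δ_eq_zero (asymm ((hy j).1 h).2)]
        exact Or.inl rfl
      · rw [show y = b j from ((hy j).2.2 h).symm, h]
        exact Or.inl (by rw [δ_self, δ_self])
      · exact ((hy j).2.1 h).1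
  by_cases hex : ∃ i, a i = x
  · obtain ⟨i₀, hi₀⟩ := hex
    refine ⟨b i₀, key _ fun j => ⟨fun hj => ?_, fun hj => ?_, fun hj => ?_⟩⟩
    · rw [← hi₀]
      exact ⟨(hE j i₀).mono (Nat.le_succ k), (hE.lt_iff j i₀).mp (hi₀ ▸ hj)⟩
    · rw [← hi₀]
      exact ⟨(hE i₀ j).mono (Nat.le_succ k), (hE.lt_iff i₀ j).mp (hi₀ ▸ hj)⟩
    · exact (hE.eq_iff j i₀).mp (hj.trans hi₀.symm)
  · push_neg at hex
    set Bel : Finset ι := Finset.univ.filter (fun i => a i < x) with hBel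
    set Abv : Finset ι := Finset.univ.filter (fun i => x < a i) with hAbv
    have hmemB : ∀ i, a i < x → i ∈ Bel := fun i hi => by simp [hBel, hi]
    have hmemA : ∀ i, x < a i → i ∈ Abv := fun i hi => by simp [hAbv, hi]
    rcases Bel.eq_empty_or_nonempty with hB | hB
    · rcases Abv.eq_empty_or_nonempty with hA | hA
      · -- no elements at all
        refine ⟨Classical.arbitrary N, key _ fun j => ?_⟩
        rcases (hex j).lt_or_gt with h | h
        · exact absurd (hmemB j h) (by simp [hB])
        · exact absurd (hmemA j h) (by simp [hA])
      · -- only elements above x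
        obtain ⟨j₀, hj₀A, hj₀min⟩ := Abv.exists_min_image a hA
        have hxj₀ : x < a j₀ := by simpa [hAbv] using hj₀A
        have hv0 : δ x (a j₀) ≠ 0 := (pos_iff_ne_zero.mp (δ_pos_iff.mpr hxj₀))
        obtain ⟨y, hy⟩ := exists_below hP k (b j₀) (δ x (a j₀))
        have hyb : y < b j₀ := by
          rw [← δ_pos_iff, hy]
          simp [pos_iff_ne_zero, hv0, pow_ne_zero, (by norm_num : (2:ℕ∞) ≠ 0)]
        have hDv : D k (δ x (a j₀)) (δ y (b j₀)) := hy ▸ D_min k _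
        have hup := upper_side hE (fun j hj => hj₀min j (hmemA j hj)) hxj₀.le hyb hDv
        refine ⟨y, key _ fun j => ⟨fun hj => ?_, hup j, fun hj => absurd hj (hex j)⟩⟩
        exact absurd (hmemB j hj) (by simp [hB])
    · obtain ⟨i₀, hi₀B, hi₀max⟩ := Bel.exists_max_image a hB
      have hi₀x : a i₀ < x := by simpa [hBel] using hi₀B
      have hu0 : δ (a i₀) x ≠ 0 := pos_iff_ne_zero.mp (δ_pos_iff.mpr hi₀x)
      rcases Abv.eq_empty_or_nonempty with hA | hA
      · -- only elements below x
        obtain ⟨y, hy⟩ := exists_above hS k (b i₀) (δ (a i₀) x)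
        have hby : b i₀ < y := by
          rw [← δ_pos_iff, hy]
          simp [pos_iff_ne_zero, hu0, pow_ne_zero, (by norm_num : (2:ℕ∞) ≠ 0)]
        have hDu : D k (δ (a i₀) x) (δ (b i₀) y) := hy ▸ D_min k _
        have hlo := lower_side hE (fun j hj => hi₀max j (hmemB j hj)) hi₀x.le hby hDu
        refine ⟨y, key _ fun j => ⟨hlo j, fun hj => ?_, fun hj => absurd hj (hex j)⟩⟩
        exact absurd (hmemA j hj) (by simp [hA])
      · -- elements on both sides
        obtain ⟨j₀, hj₀A, hj₀min⟩ := Abv.exists_min_image a hA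
        have hxj₀ : x < a j₀ := by simpa [hAbv] using hj₀A
        have hv0 : δ x (a j₀) ≠ 0 := pos_iff_ne_zero.mp (δ_pos_iff.mpr hxj₀)
        set u := δ (a i₀) x with hu
        set v := δ x (a j₀) with hv
        have hW : δ (a i₀) (a j₀) = u + v := δ_add hi₀x.le hxj₀.le
        have hD : D (k + 1) (δ (a i₀) (a j₀)) (δ (b i₀) (b j₀)) := hE i₀ j₀
        by_cases hcase : u < 2 ^ k ∨ ¬ v < 2 ^ k
        · -- go up from b i₀
          obtain ⟨y, hy⟩ := exists_above hS k (b i₀) u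
          have hby : b i₀ < y := by
            rw [← δ_pos_iff, hy]
            simp [pos_iff_ne_zero, hu0, pow_ne_zero, (by norm_num : (2:ℕ∞) ≠ 0)]
          have hDu : D k u (δ (b i₀) y) := hy ▸ D_min k _
          have hyj : y < b j₀ := by
            apply lt_of_δ_lt_right (x := b i₀)
            rcases hD with hWW | ⟨_, h2⟩
            · rw [← hWW, hW, hy]
              rcases hcase with hc | hc
              · calc min u (2 ^ k) ≤ u := min_le_left _ _
                  _ < u + v := lt_add_of_ne_zero (ne_top_of_lt hc) hv0
              · calc min u (2 ^ k) ≤ 2 ^ k := min_le_right _ _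
                  _ < u + v := by
                      have h3 : (2:ℕ∞) ^ k + 0 < v + u :=
                        WithTop.add_lt_add_of_le_of_lt (pow_ne_top k) (not_lt.mp hc)
                          (show (0:ℕ∞) < u from pos_iff_ne_zero.mpr hu0)
                      rw [add_zero] at h3
                      rw [add_comm u v]
                      exact h3
            · calc δ (b i₀) y = min u (2 ^ k) := hy
                _ ≤ 2 ^ k := min_le_right _ _
                _ < 2 ^ (k + 1) := pow_lt_succ k
                _ ≤ δ (b i₀) (b j₀) := h2
          have hW' : δ (b i₀) (b j₀) = δ (b i₀) y + δ y (b j₀) := δ_add hby.le hyj.le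
          have hDv : D k v (δ y (b j₀)) := by
            rcases hD with hWW | ⟨h1, h2⟩
            · by_cases huk : u < 2 ^ k
              · have hyu : δ (b i₀) y = u := by rw [hy, min_eq_left huk.le]
                refine Or.inl (WithTop.add_left_cancel (ne_top_of_lt huk) (?_ : u + v = u + δ y (b j₀)))
                rw [← hW, hWW, hW', hyu]
              · have hvk : ¬ v < 2 ^ k := by tauto
                refine Or.inr ⟨not_lt.mp hvk, ?_⟩
                refine trick (k := k) ?_ (hy ▸ min_le_right _ _)
                rw [add_comm (δ y (b j₀)) (δ (b i₀) y), ← hW', ← hWW, hW, pow_succ']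
                exact add_le_add (not_lt.mp huk) (not_lt.mp hvk)
            · refine Or.inr ⟨?_, ?_⟩
              · rcases hcase with hc | hc
                · exact trick (k := k) (by rw [add_comm v u, ← hW]; exact h1) hc.le
                · exact not_lt.mp hc
              · refine trick (k := k) ?_ (hy ▸ min_le_right _ _)
                rw [add_comm (δ y (b j₀)) (δ (b i₀) y), ← hW']
                exact h2
          have hlo := lower_side hE (fun j hj => hi₀max j (hmemB j hj)) hi₀x.le hby hDu
          have hup := upper_side hE (fun j hj => hj₀min j (hmemA j hj)) hxj₀.le hyj hDv
          exact ⟨y, key _ fun j => ⟨hlo j, hup j, fun hj => absurd hj (hex j)⟩⟩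
        · -- go down from b j₀
          push_neg at hcase
          obtain ⟨huk, hvk⟩ := hcase
          obtain ⟨y, hy⟩ := exists_below hP k (b j₀) v
          have hyv : δ y (b j₀) = v := by rw [hy, min_eq_left hvk.le]
          have hyj : y < b j₀ := by
            rw [← δ_pos_iff, hyv]
            exact pos_iff_ne_zero.mpr hv0
          have hby : b i₀ < y := by
            apply lt_of_δ_lt_left (z := b j₀)
            rw [hyv]
            rcases hD with hWW | ⟨_, h2⟩
            · rw [← hWW, hW, add_comm u v]
              exact lt_add_of_ne_zero (ne_top_of_lt hvk) hu0
            · exact lt_of_lt_of_le (lt_of_lt_of_le hvk (pow_lt_succ k).le) h2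
          have hW' : δ (b i₀) (b j₀) = δ (b i₀) y + δ y (b j₀) := δ_add hby.le hyj.le
          have hDu : D k u (δ (b i₀) y) := by
            rcases hD with hWW | ⟨h1, h2⟩
            · refine Or.inl ?_
              have hcan : u + v = δ (b i₀) y + v := by rw [← hW, hWW, hW', hyv]
              rw [add_comm u v, add_comm (δ (b i₀) y) v] at hcan
              exact WithTop.add_left_cancel (ne_top_of_lt hvk) hcan
            · refine Or.inr ⟨huk, ?_⟩
              refine trick (k := k) ?_ hvk.le
              rw [← hyv, ← hW']
              exact h2
          have hlo := lower_side hE (fun j hj => hi₀max j (hmemB j hj)) hi₀x.le hby hDu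
          have hup := upper_side hE (fun j hj => hj₀min j (hmemA j hj)) hxj₀.le hyj
            (Or.inl hyv.symm)
          exact ⟨y, key _ fun j => ⟨hlo j, hup j, fun hj => absurd hj (hex j)⟩⟩

end Forth

end TwoOrders

open FirstOrder Language

attribute [local instance] FirstOrder.Language.orderStructure

/-- Quantifier depth of a bounded formula. -/
def qd {L : Language} {α : Type*} : ∀ {n : ℕ}, L.BoundedFormula α n → ℕ
  | _, .falsum => 0
  | _, .equal _ _ => 0
  | _, .rel _ _ => 0
  | _, .imp f g => max (qd f) (qd g)
  | _, .all f => qd f + 1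

lemma term_is_var {γ : Type*} (t : Language.order.Term γ) : ∃ i, t = Term.var i := by
  cases t with
  | var i => exact ⟨i, rfl⟩
  | func f ts => exact Empty.elim f

/-- The reindexing map used in the quantifier step. -/
def optSum {n m : ℕ} : Fin n ⊕ Fin (m + 1) → Option (Fin n ⊕ Fin m) :=
  Sum.elim (fun i => some (Sum.inl i))
    (fun j => Fin.lastCases none (fun j' => some (Sum.inr j')) j)

lemma optSum_spec {α : Type*} {n m : ℕ} (v : Fin n → α) (xs : Fin m → α) (x : α) :
    (fun o => Option.elim o x (Sum.elim v xs)) ∘ optSum = Sum.elim v (Fin.snoc xs x) := by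
  funext p
  cases p with
  | inl i => rfl
  | inr j =>
    refine Fin.lastCases ?_ ?_ j
    · simp [optSum, Fin.snoc_last]
    · intro j'
      simp [optSum, Fin.snoc_castSucc]

section Realize

variable {M N : Type*} [LinearOrder M] [LinearOrder N] [Nonempty M] [Nonempty N]
  {SM PM : M → M} {SN PN : N → N}

theorem realize_iff_of_E (hSM : ∀ z : M, z ⋖ SM z) (hPM : ∀ z : M, PM z ⋖ z)
    (hSN : ∀ z : N, z ⋖ SN z) (hPN : ∀ z : N, PN z ⋖ z) {n : ℕ} :
    ∀ {m : ℕ} (φ : Language.order.BoundedFormula (Fin n) m) (k : ℕ), qd φ ≤ k →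
      ∀ (v : Fin n → M) (xs : Fin m → M) (w : Fin n → N) (ys : Fin m → N),
      E k (Sum.elim v xs) (Sum.elim w ys) → (φ.Realize v xs ↔ φ.Realize w ys) := by
  intro m φ
  induction φ with
  | falsum =>
    intro k hk v xs w ys hE
    simp [BoundedFormula.Realize]
  | equal t₁ t₂ =>
    intro k hk v xs w ys hE
    obtain ⟨i, rfl⟩ := term_is_var t₁
    obtain ⟨j, rfl⟩ := term_is_var t₂
    simp only [BoundedFormula.Realize, Term.realize_var]
    exact hE.eq_iff i j
  | rel R ts =>
    intro k hk v xs w ys hE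
    cases R with
    | le =>
      obtain ⟨i, hi⟩ := term_is_var (ts 0)
      obtain ⟨j, hj⟩ := term_is_var (ts 1)
      show ((ts 0).realize (Sum.elim v xs) ≤ (ts 1).realize (Sum.elim v xs)) ↔
        ((ts 0).realize (Sum.elim w ys) ≤ (ts 1).realize (Sum.elim w ys))
      rw [hi, hj]
      simp only [Term.realize_var]
      exact hE.le_iff i j
  | imp f g ihf ihg =>
    intro k hk v xs w ys hE
    have hkf : qd f ≤ k := le_trans (le_max_left _ _) hk
    have hkg : qd g ≤ k := le_trans (le_max_right _ _) hk
    rw [BoundedFormula.realize_imp, BoundedFormula.realize_imp]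
    exact imp_congr (ihf k hkf v xs w ys hE) (ihg k hkg v xs w ys hE)
  | all f ihf =>
    intro k hk v xs w ys hE
    have hk1 : qd f + 1 ≤ k := hk
    obtain ⟨k', rfl⟩ : ∃ k', k = k' + 1 := ⟨k - 1, by omega⟩
    have hkf : qd f ≤ k' := by omega
    rw [BoundedFormula.realize_all, BoundedFormula.realize_all]
    constructor
    · intro h y
      obtain ⟨x, hx⟩ := forth (M := N) (N := M) hSM hPM hE.symm y
      have hE' := (hx.symm).comp optSum
      rw [optSum_spec, optSum_spec] at hE'
      exact (ihf k' hkf v (Fin.snoc xs x) w (Fin.snoc ys y) hE').mp (h x)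
    · intro h x
      obtain ⟨y, hy⟩ := forth (M := M) (N := N) hSN hPN hE x
      have hE' := hy.comp optSum
      rw [optSum_spec, optSum_spec] at hE'
      exact (ihf k' hkf v (Fin.snoc xs x) w (Fin.snoc ys y) hE').mpr (h y)

theorem realize_formula_iff_of_E (hSM : ∀ z : M, z ⋖ SM z) (hPM : ∀ z : M, PM z ⋖ z)
    (hSN : ∀ z : N, z ⋖ SN z) (hPN : ∀ z : N, PN z ⋖ z) {n : ℕ}
    (a : Fin n → M) (b : Fin n → N) (hE : ∀ k, E k a b)
    (φ : Language.order.Formula (Fin n)) : φ.Realize a ↔ φ.Realize b := by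
  have hE' : E (qd φ) (Sum.elim a (default : Fin 0 → M))
      (Sum.elim b (default : Fin 0 → N)) := by
    intro i j
    match i, j with
    | Sum.inl i, Sum.inl j => exact hE (qd φ) i j
    | Sum.inl i, Sum.inr j => exact j.elim0
    | Sum.inr i, _ => exact i.elim0
  exact realize_iff_of_E hSM hPM hSN hPN φ (qd φ) le_rfl a default b default hE'

end Realize

section LexConcrete

variable {α : Type*} [LinearOrder α]

/-- Successor on `α ×ₗ ℤ`. -/
def Slex : α ×ₗ ℤ → α ×ₗ ℤ := fun z => toLex ((ofLex z).1, (ofLex z).2 + 1)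

/-- Predecessor on `α ×ₗ ℤ`. -/
def Plex : α ×ₗ ℤ → α ×ₗ ℤ := fun z => toLex ((ofLex z).1, (ofLex z).2 - 1)

lemma covBy_Slex (z : α ×ₗ ℤ) : z ⋖ Slex z := by
  constructor
  · exact (Prod.Lex.toLex_lt_toLex (x := (ofLex z)) (y := ((ofLex z).1, (ofLex z).2 + 1))).mpr
      (Or.inr ⟨rfl, lt_add_one _⟩)
  · intro c h1 h2
    have h1' := (Prod.Lex.toLex_lt_toLex (x := (ofLex z)) (y := (ofLex c))).mp h1
    have h2' := (Prod.Lex.toLex_lt_toLex (x := (ofLex c)) (y := ((ofLex z).1, (ofLex z).2 + 1))).mp h2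
    dsimp only at h1' h2'
    rcases h1' with h1' | ⟨h1e, h1lt⟩ <;> rcases h2' with h2' | ⟨h2e, h2lt⟩
    · exact absurd (h1'.trans h2') (lt_irrefl _)
    · exact absurd (h2e ▸ h1') (lt_irrefl _)
    · exact absurd (h1e ▸ h2') (lt_irrefl _)
    · omega

lemma covBy_Plex (z : α ×ₗ ℤ) : Plex z ⋖ z := by
  constructor
  · exact (Prod.Lex.toLex_lt_toLex (x := ((ofLex z).1, (ofLex z).2 - 1)) (y := (ofLex z))).mpr
      (Or.inr ⟨rfl, by omega⟩)
  · intro c h1 h2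
    have h1' := (Prod.Lex.toLex_lt_toLex (x := ((ofLex z).1, (ofLex z).2 - 1)) (y := (ofLex c))).mp h1
    have h2' := (Prod.Lex.toLex_lt_toLex (x := (ofLex c)) (y := (ofLex z))).mp h2
    dsimp only at h1' h2'
    rcases h1' with h1' | ⟨h1e, h1lt⟩ <;> rcases h2' with h2' | ⟨h2e, h2lt⟩
    · exact absurd (h1'.trans h2') (lt_irrefl _)
    · exact absurd (h2e ▸ h1') (lt_irrefl _)
    · exact absurd (h1e ▸ h2') (lt_irrefl _)
    · omega

lemma δ_lex_same (p : α) (q q' : ℤ) :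
    δ (toLex (p, q)) (toLex (p, q')) = (Set.Ico q q').encard := by
  have himg : Set.Ico (toLex (p, q)) (toLex (p, q'))
      = (fun t => toLex (p, t)) '' Set.Ico q q' := by
    ext z
    simp only [Set.mem_Ico, Set.mem_image]
    constructor
    · rintro ⟨h1, h2⟩
      have h1' := (Prod.Lex.toLex_le_toLex (x := (p, q)) (y := (ofLex z))).mp h1
      have h2' := (Prod.Lex.toLex_lt_toLex (x := (ofLex z)) (y := (p, q'))).mp h2
      dsimp only at h1' h2'
      rcases h1' with h1' | ⟨h1e, h1le⟩ <;> rcases h2' with h2' | ⟨h2e, h2lt⟩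
      · exact absurd (h1'.trans h2') (lt_irrefl p)
      · exact absurd (h2e ▸ h1') (lt_irrefl _)
      · exact absurd (h1e ▸ h2') (lt_irrefl _)
      · exact ⟨(ofLex z).2, ⟨h1le, h2lt⟩, by rw [h1e]; exact congrArg toLex Prod.mk.eta⟩
    · rintro ⟨t, ⟨ht1, ht2⟩, rfl⟩
      constructor
      · rw [Prod.Lex.le_iff]; exact Or.inr ⟨rfl, ht1⟩
      · rw [Prod.Lex.lt_iff]; exact Or.inr ⟨rfl, ht2⟩
  rw [δ, himg, Set.InjOn.encard_image]
  intro s _ t _ hst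
  simpa using congrArg (fun z => (ofLex z).2) hst

lemma δ_lex_lt {p p' : α} (h : p < p') (q q' : ℤ) :
    δ (toLex (p, q)) (toLex (p', q')) = ⊤ := by
  rw [δ]
  apply Set.Infinite.encard_eq
  refine Set.infinite_of_injective_forall_mem (f := fun t : ℕ => toLex (p, q + t)) ?_ ?_
  · intro s t hst
    have := congrArg (fun z => (ofLex z).2) hst
    simpa using this
  · intro t
    constructor
    · exact (Prod.Lex.toLex_le_toLex (x := (p, q)) (y := (p, q + t))).mpr (Or.inr ⟨rfl, by omega⟩)
    · exact (Prod.Lex.toLex_lt_toLex (x := (p, q + t)) (y := (p', q'))).mpr (Or.inl h)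

lemma δ_lex_gt {p p' : α} (h : p' < p) (q q' : ℤ) :
    δ (toLex (p, q)) (toLex (p', q')) = 0 := by
  apply δ_eq_zero
  intro hlt
  have hc := (Prod.Lex.toLex_lt_toLex (x := (p, q)) (y := (p', q'))).mp hlt
  dsimp only at hc
  rcases hc with hc | ⟨hc, -⟩
  · exact absurd (h.trans hc) (lt_irrefl _)
  · exact absurd (hc ▸ h) (lt_irrefl _)

end LexConcrete

section Tuples

/-- The coordinatewise embedding of `ℤ ×ₗ ℤ` into `ℚ ×ₗ ℤ`. -/
def emb : ℤ ×ₗ ℤ → ℚ ×ₗ ℤ := fun z => toLex (((ofLex z).1 : ℚ), (ofLex z).2)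

lemma E_emb {n : ℕ} (a : Fin n → ℤ ×ₗ ℤ) (k : ℕ) : E k a (emb ∘ a) := by
  intro i j
  refine Or.inl ?_
  have hai : a i = toLex ((ofLex (a i)).1, (ofLex (a i)).2) := rfl
  have haj : a j = toLex ((ofLex (a j)).1, (ofLex (a j)).2) := rfl
  have hbi : (emb ∘ a) i = toLex (((ofLex (a i)).1 : ℚ), (ofLex (a i)).2) := rfl
  have hbj : (emb ∘ a) j = toLex (((ofLex (a j)).1 : ℚ), (ofLex (a j)).2) := rfl
  rw [hai, haj, hbi, hbj]
  rcases lt_trichotomy ((ofLex (a i)).1) ((ofLex (a j)).1) with h | h | h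
  · rw [δ_lex_lt h, δ_lex_lt (by exact_mod_cast h)]
  · rw [h, δ_lex_same, δ_lex_same]
  · rw [δ_lex_gt h, δ_lex_gt (by exact_mod_cast h)]

/-- Counting map sending the first coordinates of a finite tuple of rationals to integers. -/
def cnt {n : ℕ} (b : Fin n → ℚ ×ₗ ℤ) (i : Fin n) : ℕ :=
  (Finset.univ.filter fun j => (ofLex (b j)).1 < (ofLex (b i)).1).card

/-- A tuple in `ℤ ×ₗ ℤ` with the same relative positions as a given tuple in `ℚ ×ₗ ℤ`. -/
def pull {n : ℕ} (b : Fin n → ℚ ×ₗ ℤ) (i : Fin n) : ℤ ×ₗ ℤ :=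
  toLex ((cnt b i : ℤ), (ofLex (b i)).2)

lemma cnt_lt {n : ℕ} (b : Fin n → ℚ ×ₗ ℤ) {i j : Fin n}
    (h : (ofLex (b i)).1 < (ofLex (b j)).1) : cnt b i < cnt b j := by
  apply Finset.card_lt_card
  constructor
  · intro t ht
    simp only [Finset.mem_filter, Finset.mem_univ, true_and] at ht ⊢
    exact ht.trans h
  · intro hsub
    have : i ∈ Finset.univ.filter fun t => (ofLex (b t)).1 < (ofLex (b j)).1 := by
      simp [h]
    have hmem := hsub this
    simp only [Finset.mem_filter, Finset.mem_univ, true_and] at hmem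
    exact absurd hmem (lt_irrefl _)

lemma cnt_eq {n : ℕ} (b : Fin n → ℚ ×ₗ ℤ) {i j : Fin n}
    (h : (ofLex (b i)).1 = (ofLex (b j)).1) : cnt b i = cnt b j := by
  unfold cnt
  congr 1
  apply Finset.filter_congr
  intro t _
  rw [h]

lemma E_pull {n : ℕ} (b : Fin n → ℚ ×ₗ ℤ) (k : ℕ) : E k (pull b) b := by
  intro i j
  refine Or.inl ?_
  have hbi : b i = toLex ((ofLex (b i)).1, (ofLex (b i)).2) := rfl
  have hbj : b j = toLex ((ofLex (b j)).1, (ofLex (b j)).2) := rfl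
  rw [show pull b i = toLex ((cnt b i : ℤ), (ofLex (b i)).2) from rfl,
    show pull b j = toLex ((cnt b j : ℤ), (ofLex (b j)).2) from rfl, hbi, hbj]
  rcases lt_trichotomy ((ofLex (b i)).1) ((ofLex (b j)).1) with h | h | h
  · rw [δ_lex_lt h, δ_lex_lt (by exact_mod_cast cnt_lt b h)]
  · rw [h, show ((cnt b i : ℤ)) = ((cnt b j : ℤ)) from by exact_mod_cast cnt_eq b h,
      δ_lex_same, δ_lex_same]
    simp
  · rw [δ_lex_gt h, δ_lex_gt (by exact_mod_cast cnt_lt b h)]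

end Tuples

section NoIso

lemma δ_map {M N : Type*} [LinearOrder M] [LinearOrder N] (f : M ≃o N) (x y : M) :
    δ (f x) (f y) = δ x y := by
  rw [δ, δ, ← OrderIso.image_Ico, Set.InjOn.encard_image (f.injective.injOn)]

lemma δ_lex_same_ne_top {α : Type*} [LinearOrder α] (p : α) (q q' : ℤ) :
    δ (toLex (p, q)) (toLex (p, q')) ≠ ⊤ := by
  rw [δ_lex_same]
  exact (Set.finite_Ico q q').encard_lt_top.ne

lemma no_iso : IsEmpty ((ℤ ×ₗ ℤ) ≃o (ℚ ×ₗ ℤ)) := by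
  constructor
  intro f
  set z0 : ℤ ×ₗ ℤ := toLex (0, 0) with hz0
  set z1 : ℤ ×ₗ ℤ := toLex (1, 0) with hz1
  have hf0 : f z0 = toLex ((ofLex (f z0)).1, (ofLex (f z0)).2) := rfl
  have hf1 : f z1 = toLex ((ofLex (f z1)).1, (ofLex (f z1)).2) := rfl
  have htop : δ (f z0) (f z1) = ⊤ := by
    rw [δ_map, hz0, hz1, δ_lex_lt one_pos]
  have hqr : (ofLex (f z0)).1 < (ofLex (f z1)).1 := by
    rcases lt_trichotomy ((ofLex (f z0)).1) ((ofLex (f z1)).1) with h | h | h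
    · exact h
    · rw [hf0, hf1, h] at htop
      exact absurd htop (δ_lex_same_ne_top _ _ _)
    · rw [hf0, hf1, δ_lex_gt h] at htop
      simp at htop
  obtain ⟨s, hs1, hs2⟩ := exists_between hqr
  set w : ℤ ×ₗ ℤ := f.symm (toLex (s, 0)) with hw
  have hfw : f w = toLex (s, 0) := by rw [hw, OrderIso.apply_symm_apply]
  have hw0 : z0 < w := by
    rw [← f.lt_iff_lt, hfw, hf0]
    exact Prod.Lex.toLex_lt_toLex.mpr (Or.inl hs1)
  have hw1 : w < z1 := by
    rw [← f.lt_iff_lt, hfw, hf1]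
    exact Prod.Lex.toLex_lt_toLex.mpr (Or.inl hs2)
  have hww : w = toLex ((ofLex w).1, (ofLex w).2) := rfl
  have hc0 : (0 : ℤ) ≤ (ofLex w).1 := by
    have := (Prod.Lex.toLex_lt_toLex (x := (0, 0)) (y := (ofLex w))).mp (by rw [← hz0]; exact hw0)
    dsimp only at this
    rcases this with h | ⟨h, -⟩
    · exact h.le
    · exact h.le
  have hc1 : (ofLex w).1 ≤ 1 := by
    have := (Prod.Lex.toLex_lt_toLex (x := (ofLex w)) (y := (1, 0))).mp (by rw [← hz1]; exact hw1)
    dsimp only at this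
    rcases this with h | ⟨h, -⟩
    · exact h.le
    · exact h.le
  have htop0 : δ z0 w = ⊤ := by
    rw [← δ_map f, hfw, hf0, δ_lex_lt hs1]
  have htop1 : δ w z1 = ⊤ := by
    rw [← δ_map f, hfw, hf1, δ_lex_lt hs2]
  have hcases : (ofLex w).1 = 0 ∨ (ofLex w).1 = 1 := by omega
  rcases hcases with h | h
  · rw [h] at hww
    rw [hz0, hww] at htop0
    exact absurd htop0 (δ_lex_same_ne_top _ _ _)
  · rw [h] at hww
    rw [hz1, hww] at htop1
    exact absurd htop1 (δ_lex_same_ne_top _ _ _)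

end NoIso

end LexEF


instance : Nonempty (ℤ ×ₗ ℤ) := ⟨toLex (0, 0)⟩
instance : Nonempty (ℚ ×ₗ ℤ) := ⟨toLex (0, 0)⟩

/-- The lexicographic orders `ℤ ×ₗ ℤ` and `ℚ ×ₗ ℤ` are isotypic but not
order-isomorphic. -/
theorem lex_int_int_isotypic_not_orderIso_lex_rat_int :
    Isotypic Language.order (ℤ ×ₗ ℤ) (ℚ ×ₗ ℤ) ∧ IsEmpty ((ℤ ×ₗ ℤ) ≃o (ℚ ×ₗ ℤ)) := by
  refine ⟨⟨?_, ?_⟩, LexEF.no_iso⟩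
  · intro n a
    exact ⟨LexEF.emb ∘ a, fun φ =>
      LexEF.realize_formula_iff_of_E LexEF.covBy_Slex LexEF.covBy_Plex
        LexEF.covBy_Slex LexEF.covBy_Plex a (LexEF.emb ∘ a) (LexEF.E_emb a) φ⟩
  · intro n b
    exact ⟨LexEF.pull b, fun φ =>
      LexEF.realize_formula_iff_of_E LexEF.covBy_Slex LexEF.covBy_Plex
        LexEF.covBy_Slex LexEF.covBy_Plex (LexEF.pull b) b (LexEF.E_pull b) φ⟩
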